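/- Let n ≥ 1 and 1 < q < 2, and let R > 0. Then there exists δ > 0, depending only on q and R, such that for all p₁, p₂ ∈ ℝⁿ with |p₁| ≤ R and |p₂| ≤ R, |p₁|^q/q − |p₂|^q/q ≥ |p₂|^{q−2} p₂ · (p₁ − p₂) + δ|p₁ − p₂|², where |p₂|^{q−2}p₂ is interpreted as 0 when p₂ = 0. That is, p ↦ |p|^q/q is (2,δ)-strongly convex on every bounded convex subset of ℝⁿ when 1 < q < 2. -/

import Mathlib

open RealInnerProductSpace

/-- Monotonicity of `t ↦ |t|^(q-2)*t - (q-1)*R^(q-2)*t` on `[-R, R]`. -/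
lemma aux_mono {q R : ℝ} (hq1 : 1 < q) (hq2 : q < 2) (hR : 0 < R)
    (a b : ℝ) (ha : -R ≤ a) (hab : a ≤ b) (hb : b ≤ R) :
    |a| ^ (q-2) * a - (q-1) * R^(q-2) * a ≤ |b| ^ (q-2) * b - (q-1) * R^(q-2) * b := by
  set K : ℝ := (q-1) * R^(q-2) with hK
  -- monotonicity on [0, R] for g t = t^(q-1) - K t
  have gmono : ∀ a b : ℝ, 0 ≤ a → a ≤ b → b ≤ R →
      a ^ (q-1) - K * a ≤ b ^ (q-1) - K * b := by
    intro a b ha hab hb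
    rcases eq_or_lt_of_le hab with rfl | hab
    · exact le_rfl
    have hcont : ContinuousOn (fun t : ℝ => t ^ (q-1) - K * t) (Set.Icc a b) := by
      apply ContinuousOn.sub
      · intro x _
        exact (Real.continuousAt_rpow_const x (q-1) (Or.inr (by linarith))).continuousWithinAt
      · exact (continuous_const.mul continuous_id).continuousOn
    have hderiv : ∀ x ∈ Set.Ioo a b, HasDerivAt (fun t : ℝ => t ^ (q-1) - K * t)
        ((q-1) * x ^ (q-2) - K) x := by
      intro x hx
      have hx0 : 0 < x := lt_of_le_of_lt ha hx.1
      have h1 := Real.hasDerivAt_rpow_const (x := x) (p := q-1) (Or.inl hx0.ne')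
      have h2 : HasDerivAt (fun t : ℝ => K * t) K x := by
        simpa using (hasDerivAt_id x).const_mul K
      have : q - 1 - 1 = q - 2 := by ring
      rw [this] at h1
      exact h1.sub h2
    obtain ⟨c, hc, hceq⟩ := exists_hasDerivAt_eq_slope _ _ hab hcont hderiv
    have hc0 : 0 < c := lt_of_le_of_lt ha hc.1
    have hcR : c ≤ R := le_of_lt (lt_of_lt_of_le hc.2 hb)
    have hge : R ^ (q-2) ≤ c ^ (q-2) :=
      Real.rpow_le_rpow_of_nonpos hc0 hcR (by linarith)
    have hKc : 0 ≤ (q-1) * c ^ (q-2) - K := by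
      rw [hK]; nlinarith [Real.rpow_pos_of_pos hR (q-2)]
    have hslope : 0 ≤ (b ^ (q-1) - K * b - (a ^ (q-1) - K * a)) / (b - a) := by
      rw [← hceq]; exact hKc
    have hba : 0 < b - a := by linarith
    nlinarith [mul_nonneg hslope hba.le, div_mul_cancel₀
      (b ^ (q-1) - K * b - (a ^ (q-1) - K * a)) hba.ne']
  -- nonnegativity on [0, R]
  have gpos : ∀ t : ℝ, 0 ≤ t → t ≤ R → 0 ≤ t ^ (q-1) - K * t := by
    intro t ht htR
    rcases eq_or_lt_of_le ht with rfl | ht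
    · simp [Real.zero_rpow (by linarith : q - 1 ≠ 0)]
    have h1 : R ^ (q-2) ≤ t ^ (q-2) := Real.rpow_le_rpow_of_nonpos ht htR (by linarith)
    have h2 : t ^ (q-1) = t ^ (q-2) * t := by
      rw [← Real.rpow_add_one ht.ne' (q-2)]; ring_nf
    rw [h2, hK]
    nlinarith [mul_le_mul_of_nonneg_right h1 ht.le, mul_pos (Real.rpow_pos_of_pos hR (q-2)) ht]
  -- convert |t|-form to g-form
  have hconv : ∀ t : ℝ, 0 ≤ t → |t| ^ (q-2) * t - K * t = t ^ (q-1) - K * t := by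
    intro t ht
    rw [abs_of_nonneg ht]
    rcases eq_or_lt_of_le ht with rfl | ht
    · simp [Real.zero_rpow (by linarith : q - 1 ≠ 0)]
    · rw [show t ^ (q-1) = t ^ (q-2) * t by rw [← Real.rpow_add_one ht.ne' (q-2)]; ring_nf]
  have hconvneg : ∀ t : ℝ, t ≤ 0 → |t| ^ (q-2) * t - K * t
      = -((-t) ^ (q-1) - K * (-t)) := by
    intro t ht
    have := hconv (-t) (by linarith)
    rw [abs_neg] at this
    nlinarith [this]
  rcases le_total 0 a with ha0 | ha0
  · rw [hconv a ha0, hconv b (le_trans ha0 hab)]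
    exact gmono a b ha0 hab hb
  · rcases le_total 0 b with hb0 | hb0
    · rw [hconvneg a ha0, hconv b hb0]
      have h1 := gpos (-a) (by linarith) (by linarith)
      have h2 := gpos b hb0 hb
      linarith
    · rw [hconvneg a ha0, hconvneg b hb0]
      have := gmono (-b) (-a) (by linarith) (by linarith) (by linarith)
      linarith

/-- 1D strong convexity of `t ↦ |t|^q/q` on `[-R,R]`. -/
lemma key1d {q R : ℝ} (hq1 : 1 < q) (hq2 : q < 2) (hR : 0 < R)
    (u v : ℝ) (hu : |u| ≤ R) (hv0 : 0 ≤ v) (hvR : v ≤ R) :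
    |u| ^ q / q - v ^ q / q ≥
      (v ^ (q-2) * v) * (u - v) + ((q-1) * R^(q-2) / 2) * (u - v)^2 := by
  set K : ℝ := (q-1) * R^(q-2) with hK
  set ψ : ℝ → ℝ := fun t => |t| ^ q / q - (K/2) * t^2 with hψdef
  have hq0 : q ≠ 0 := by linarith
  have hψ : ∀ t : ℝ, HasDerivAt ψ (|t| ^ (q-2) * t - K * t) t := by
    intro t
    have h1 := (hasDerivAt_abs_rpow t hq1).div_const q
    have h2 : HasDerivAt (fun t : ℝ => (K/2) * t^2) (K * t) t := by
      have := ((hasDerivAt_pow 2 t).const_mul (K/2))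
      refine this.congr_deriv ?_
      push_cast; ring
    refine (h1.sub h2).congr_deriv ?_
    field_simp
  have hmvt : ψ u - ψ v ≥ (|v| ^ (q-2) * v - K * v) * (u - v) := by
    rcases lt_trichotomy u v with huv | rfl | huv
    · obtain ⟨c, hc, hceq⟩ := exists_hasDerivAt_eq_slope ψ _ huv
        (fun x _ => (hψ x).continuousAt.continuousWithinAt) (fun x hx => hψ x)
    -- hceq : |c|^(q-2)*c - K*c = (ψ v - ψ u)/(v - u)
      have hmc : |c| ^ (q-2) * c - K * c ≤ |v| ^ (q-2) * v - K * v := by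
        have haR : -R ≤ u := (abs_le.1 hu).1
        exact aux_mono hq1 hq2 hR c v (by linarith [hc.1]) hc.2.le hvR
      have hvu : (0:ℝ) < v - u := by linarith
      have : ψ v - ψ u = (|c| ^ (q-2) * c - K * c) * (v - u) := by
        rw [hceq]; field_simp
      nlinarith [mul_le_mul_of_nonneg_right hmc hvu.le]
    · simp
    · obtain ⟨c, hc, hceq⟩ := exists_hasDerivAt_eq_slope ψ _ huv
        (fun x _ => (hψ x).continuousAt.continuousWithinAt) (fun x hx => hψ x)
      have hmc : |v| ^ (q-2) * v - K * v ≤ |c| ^ (q-2) * c - K * c := by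
        have huR : u ≤ R := (abs_le.1 hu).2
        exact aux_mono hq1 hq2 hR v c (by linarith) hc.1.le (by linarith [hc.2])
      have hvu : (0:ℝ) < u - v := by linarith
      have : ψ u - ψ v = (|c| ^ (q-2) * c - K * c) * (u - v) := by
        rw [hceq]; field_simp
      nlinarith [mul_le_mul_of_nonneg_right hmc hvu.le]
  rw [hψdef] at hmvt
  simp only [abs_of_nonneg hv0] at hmvt
  nlinarith [hmvt]

/-- **`(2,δ)`-strong convexity of `p ↦ |p|^q/q` on bounded sets, `1 < q < 2`**
(used in Theorem 4.1): for `1 < q < 2` and `R > 0` there is `δ > 0`, depending only on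
`q` and `R`, such that for all `p₁, p₂` with `|p₁|, |p₂| ≤ R`,
`|p₁|^q/q - |p₂|^q/q ≥ |p₂|^{q-2}p₂·(p₁-p₂) + δ|p₁-p₂|²`. -/
theorem strong_convexity_on_bounded_sets (q R : ℝ) (hq1 : 1 < q) (hq2 : q < 2)
    (hR : 0 < R) :
    ∃ δ : ℝ, 0 < δ ∧ ∀ (n : ℕ), 1 ≤ n → ∀ p₁ p₂ : EuclideanSpace ℝ (Fin n),
      ‖p₁‖ ≤ R → ‖p₂‖ ≤ R →
      ‖p₁‖ ^ q / q - ‖p₂‖ ^ q / q ≥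
        ⟪(‖p₂‖ ^ (q - 2)) • p₂, p₁ - p₂⟫ + δ * ‖p₁ - p₂‖ ^ 2 := by
  refine ⟨(q-1) * R^(q-2) / 2, by have := Real.rpow_pos_of_pos hR (q-2); nlinarith, ?_⟩
  intro n _ p₁ p₂ h1 h2
  set δ : ℝ := (q-1) * R^(q-2) / 2 with hδ
  set x : ℝ := ‖p₁‖ with hx
  set y : ℝ := ‖p₂‖ with hy
  set s : ℝ := inner ℝ p₂ p₁ with hs
  have hx0 : 0 ≤ x := norm_nonneg _
  have hy0 : 0 ≤ y := norm_nonneg _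
  have hcs : |s| ≤ y * x := abs_real_inner_le_norm p₂ p₁
  obtain ⟨hcs1, hcs2⟩ := abs_le.1 hcs
  have hinner : ⟪(y ^ (q - 2)) • p₂, p₁ - p₂⟫ = y ^ (q-2) * (s - y^2) := by
    rw [real_inner_smul_left, inner_sub_right, ← hs, real_inner_self_eq_norm_sq]
  have hns : ‖p₁ - p₂‖ ^ 2 = x^2 - 2*s + y^2 := by
    rw [norm_sub_sq_real, real_inner_comm]
  rw [hinner, hns]
  have k₁ := key1d hq1 hq2 hR x y (by rwa [abs_of_nonneg hx0]) hy0 h2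
  have k₂ := key1d hq1 hq2 hR (-x) y (by rwa [abs_neg, abs_of_nonneg hx0]) hy0 h2
  rw [abs_of_nonneg hx0] at k₁
  rw [abs_neg, abs_of_nonneg hx0] at k₂
  rcases le_total (y ^ (q-2)) (2*δ) with hcase | hcase
  · have hfac : 0 ≤ (2*δ - y^(q-2)) * (s + y*x) :=
      mul_nonneg (by linarith) (by linarith)
    nlinarith [k₂, hfac]
  · have hfac : 0 ≤ (y^(q-2) - 2*δ) * (y*x - s) :=
      mul_nonneg (by linarith) (by linarith)
    nlinarith [k₁, hfac]
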